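/- Let φ′ be a continuous flow on a second compact metric space (E′, d′), let V′ be a finite-dimensional real normed vector space and b a V′-valued cocycle over φ′. Suppose π : E → E′ is a continuous map with π(t·x) = t·π(x) for all t ∈ 𝕋, x ∈ E, and p : V → V′ is a linear map such that b(t, π(x)) = p(a(t,x)) for all t ∈ 𝕋, x ∈ E. If M ⊆ E is a chain component of φ and π(M) is a chain component of φ′, then Λ_Mo(π(M), b) = p(Λ_Mo(M, a)), where the notation indicates which cocycle is used to form the Morse spectrum. -/

import Mathlib

open Filter Topology

section

variable {E : Type*} [MetricSpace E] [CompactSpace E]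
variable {V : Type*} [NormedAddCommGroup V] [NormedSpace ℝ V] [FiniteDimensional ℝ V]

/-- `a` is a continuous `V`-valued cocycle over the flow `φ`. -/
def IsAddCocycle (φ : Flow ℝ E) (a : ℝ → E → V) : Prop :=
  Continuous (fun p : ℝ × E => a p.1 p.2) ∧
    ∀ t s x, a (t + s) x = a t (φ s x) + a s x

/-- `(N, x, t)` is an `(ε, T)`-chain of the flow `φ` from `p` to `q`:
points `x 0 = p, x 1, …, x N = q` and times `t 0, …, t (N-1)` with `t i ≥ T`
and `dist (φ (t i) (x i)) (x (i+1)) < ε`. -/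
def IsFlowChain (φ : Flow ℝ E) (ε T : ℝ) (N : ℕ) (x : ℕ → E) (t : ℕ → ℝ) (p q : E) : Prop :=
  0 < N ∧ x 0 = p ∧ x N = q ∧ (∀ i < N, T ≤ t i) ∧
    ∀ i < N, dist (φ (t i) (x i)) (x (i + 1)) < ε

/-- The finite-time Morse exponent of a chain:
`(1 / (t 0 + ⋯ + t (N-1))) • (a (t 0) (x 0) + ⋯ + a (t (N-1)) (x (N-1)))`. -/
noncomputable def chainExp (a : ℝ → E → V) (N : ℕ) (x : ℕ → E) (t : ℕ → ℝ) : V :=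
  (∑ i ∈ Finset.range N, t i)⁻¹ • ∑ i ∈ Finset.range N, a (t i) (x i)

/-- The Morse spectrum of `M ⊆ E`: intersection over `ε, T > 0` of the closures
of the sets of finite-time Morse exponents of `(ε,T)`-chains belonging to `M`. -/
noncomputable def morseSpec (φ : Flow ℝ E) (a : ℝ → E → V) (M : Set E) : Set V :=
  ⋂ (ε : ℝ) (_ : 0 < ε) (T : ℝ) (_ : 0 < T), closure
    {v | ∃ N x t, ∃ p ∈ M, ∃ q ∈ M, IsFlowChain φ ε T N x t p q ∧ v = chainExp a N x t}

/-- `M` is chain transitive: any two points of `M` are joined by `(ε,T)`-chains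
for all `ε, T > 0`. -/
def IsChainTransitiveSet (φ : Flow ℝ E) (M : Set E) : Prop :=
  ∀ p ∈ M, ∀ q ∈ M, ∀ ε > (0:ℝ), ∀ T > (0:ℝ), ∃ N x t, IsFlowChain φ ε T N x t p q

/-- A chain component is a maximal chain transitive subset. -/
def IsChainComponent (φ : Flow ℝ E) (M : Set E) : Prop :=
  IsChainTransitiveSet φ M ∧
    ∀ M' : Set E, IsChainTransitiveSet φ M' → M ⊆ M' → M = M'


set_option linter.unusedSectionVars false
set_option linter.unusedTactic false

namespace MorseSpecAux

variable {X : Type*} [MetricSpace X] [CompactSpace X]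
variable {W : Type*} [NormedAddCommGroup W] [NormedSpace ℝ W] [FiniteDimensional ℝ W]
variable {φ : Flow ℝ X}

/-- concatenation of indexed data -/
def cat {α : Type*} (N : ℕ) (u v : ℕ → α) : ℕ → α := fun i => if i < N then u i else v (i - N)

lemma cat_lt {α : Type*} {N : ℕ} {u v : ℕ → α} {i : ℕ} (h : i < N) : cat N u v i = u i := if_pos h

lemma cat_ge {α : Type*} {N : ℕ} {u v : ℕ → α} {i : ℕ} (h : N ≤ i) : cat N u v i = v (i - N) :=
  if_neg (by omega)

lemma sum_cat {M : Type*} [AddCommMonoid M] (N N' : ℕ) (H F G : ℕ → M)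
    (h1 : ∀ i < N, H i = F i) (h2 : ∀ i < N', H (N + i) = G i) :
    ∑ i ∈ Finset.range (N + N'), H i = ∑ i ∈ Finset.range N, F i + ∑ i ∈ Finset.range N', G i := by
  rw [Finset.sum_range_add]
  exact congrArg₂ (· + ·)
    (Finset.sum_congr rfl fun i hi => h1 i (Finset.mem_range.1 hi))
    (Finset.sum_congr rfl fun i hi => h2 i (Finset.mem_range.1 hi))

lemma chain_pos_eps {ε T : ℝ} {N : ℕ} {x : ℕ → X} {t : ℕ → ℝ} {p q : X}
    (h : IsFlowChain φ ε T N x t p q) : 0 < ε :=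
  lt_of_le_of_lt dist_nonneg (h.2.2.2.2 0 h.1)

lemma chain_mono {ε T ε' T' : ℝ} {N : ℕ} {x : ℕ → X} {t : ℕ → ℝ} {p q : X}
    (h : IsFlowChain φ ε T N x t p q) (hε : ε ≤ ε') (hT : T' ≤ T) :
    IsFlowChain φ ε' T' N x t p q :=
  ⟨h.1, h.2.1, h.2.2.1, fun i hi => hT.trans (h.2.2.2.1 i hi),
    fun i hi => (h.2.2.2.2 i hi).trans_le hε⟩

lemma chain_cat {ε T : ℝ} {N N' : ℕ} {x x' : ℕ → X} {t t' : ℕ → ℝ} {p q r : X}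
    (h : IsFlowChain φ ε T N x t p q) (h' : IsFlowChain φ ε T N' x' t' q r) :
    IsFlowChain φ ε T (N + N') (cat N x x') (cat N t t') p r := by
  obtain ⟨hN, hx0, hxN, ht, hd⟩ := h
  obtain ⟨hN', hx0', hxN', ht', hd'⟩ := h'
  refine ⟨by omega, by rw [cat_lt hN]; exact hx0, ?_, ?_, ?_⟩
  · rw [cat_ge (Nat.le_add_right _ _)]
    simpa using hxN'
  · intro i hi
    rcases lt_or_ge i N with h1 | h1
    · rw [cat_lt h1]; exact ht i h1
    · rw [cat_ge h1]; exact ht' _ (by omega)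
  · intro i hi
    rcases lt_or_ge i N with h1 | h1
    · rw [cat_lt h1, cat_lt h1]
      rcases lt_or_ge (i+1) N with h2 | h2
      · rw [cat_lt h2]; exact hd i h1
      · have hiN : i + 1 = N := by omega
        rw [cat_ge h2]
        have e0 : (i+1) - N = 0 := by omega
        rw [e0, hx0', ← hxN, ← hiN]
        exact hd i h1
    · rw [cat_ge h1, cat_ge h1, cat_ge (by omega : N ≤ i + 1)]
      have e : i + 1 - N = (i - N) + 1 := by omega
      rw [e]
      exact hd' _ (by omega)

lemma cat_mem {S : Set X} {N N' : ℕ} {x x' : ℕ → X}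
    (hx : ∀ i < N, x i ∈ S) (hx' : ∀ i < N', x' i ∈ S) :
    ∀ i < N + N', cat N x x' i ∈ S := by
  intro i hi
  rcases lt_or_ge i N with h1 | h1
  · rw [cat_lt h1]; exact hx i h1
  · rw [cat_ge h1]; exact hx' _ (by omega)

lemma chain_single {ε T t₀ : ℝ} {u v : X} (ht : T ≤ t₀) (hd : dist (φ t₀ u) v < ε) :
    IsFlowChain φ ε T 1 (fun i => if i = 0 then u else v) (fun _ => t₀) u v := by
  refine ⟨one_pos, rfl, by norm_num, fun i _ => ht, fun i hi => ?_⟩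
  have : i = 0 := by omega
  subst this
  simpa using hd

lemma chain_take {ε T : ℝ} {N : ℕ} {x : ℕ → X} {t : ℕ → ℝ} {p q : X}
    (h : IsFlowChain φ ε T N x t p q) {j : ℕ} (hj0 : 0 < j) (hjN : j ≤ N) :
    IsFlowChain φ ε T j x t p (x j) :=
  ⟨hj0, h.2.1, rfl, fun i hi => h.2.2.2.1 i (lt_of_lt_of_le hi hjN),
    fun i hi => h.2.2.2.2 i (lt_of_lt_of_le hi hjN)⟩

lemma chain_drop {ε T : ℝ} {N : ℕ} {x : ℕ → X} {t : ℕ → ℝ} {p q : X}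
    (h : IsFlowChain φ ε T N x t p q) {j : ℕ} (hj : j < N) :
    IsFlowChain φ ε T (N - j) (fun i => x (j + i)) (fun i => t (j + i)) (x j) q := by
  refine ⟨by omega, by simp, ?_, fun i hi => h.2.2.2.1 _ (by omega), fun i hi => ?_⟩
  · show x (j + (N - j)) = q
    have e : j + (N - j) = N := by omega
    rw [e]; exact h.2.2.1
  · show dist (φ (t (j + i)) (x (j + i))) (x (j + (i + 1))) < ε
    have e : j + (i + 1) = (j + i) + 1 := by omega
    rw [e]
    exact h.2.2.2.2 _ (by omega)

lemma chain_retarget {ε₁ ε T : ℝ} {N : ℕ} {x : ℕ → X} {t : ℕ → ℝ} {p q : X}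
    (h : IsFlowChain φ ε₁ T N x t p q) (z : X) (hz : ε₁ + dist q z ≤ ε) :
    IsFlowChain φ ε T N (Function.update x N z) t p z := by
  obtain ⟨hN, hx0, hxN, ht, hd⟩ := h
  have hε : ε₁ ≤ ε := le_trans (le_add_of_nonneg_right dist_nonneg) hz
  refine ⟨hN, ?_, Function.update_self _ _ _, ht, fun i hi => ?_⟩
  · rw [Function.update_of_ne (by omega)]; exact hx0
  · rw [Function.update_of_ne (by omega : i ≠ N)]
    rcases eq_or_ne (i+1) N with h2 | h2
    · rw [h2, Function.update_self]
      calc dist (φ (t i) (x i)) z ≤ dist (φ (t i) (x i)) (x (i+1)) + dist (x (i+1)) z :=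
            dist_triangle _ _ _
        _ < ε₁ + dist q z := by
            rw [h2, hxN]
            exact add_lt_add_of_lt_of_le (by rw [← hxN, ← h2]; exact hd i hi) le_rfl
        _ ≤ ε := hz
    · rw [Function.update_of_ne h2]
      exact (hd i hi).trans_le hε

lemma chain_changehead {ε₁ ε T : ℝ} {N : ℕ} {x : ℕ → X} {t : ℕ → ℝ} {u q : X}
    (h : IsFlowChain φ ε₁ T N x t u q) (p' : X)
    (hd : dist (φ (t 0) p') (x 1) < ε) (hε : ε₁ ≤ ε) :
    IsFlowChain φ ε T N (Function.update x 0 p') t p' q := by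
  obtain ⟨hN, hx0, hxN, ht, hdd⟩ := h
  refine ⟨hN, Function.update_self _ _ _, ?_, ht, fun i hi => ?_⟩
  · rw [Function.update_of_ne (by omega)]; exact hxN
  · rcases eq_or_ne i 0 with rfl | h0
    · rw [Function.update_self, Function.update_of_ne (by omega)]
      exact hd
    · rw [Function.update_of_ne h0, Function.update_of_ne (by omega)]
      exact (hdd i hi).trans_le hε

lemma chain_extend_last {ε₁ ε T : ℝ} {N : ℕ} {x : ℕ → X} {t : ℕ → ℝ} {p q : X}
    (h : IsFlowChain φ ε₁ T N x t p q) {s : ℝ} (z : X) (hs : 0 ≤ s)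
    (hd : dist (φ (t (N-1) + s) (x (N-1))) z < ε) (hε : ε₁ ≤ ε) :
    IsFlowChain φ ε T N (Function.update x N z) (Function.update t (N-1) (t (N-1) + s)) p z := by
  obtain ⟨hN, hx0, hxN, ht, hdd⟩ := h
  refine ⟨hN, ?_, Function.update_self _ _ _, fun i hi => ?_, fun i hi => ?_⟩
  · rw [Function.update_of_ne (by omega)]; exact hx0
  · rcases eq_or_ne i (N-1) with rfl | h0
    · rw [Function.update_self]
      have := ht (N-1) (by omega)
      linarith
    · rw [Function.update_of_ne h0]; exact ht i hi
  · rcases eq_or_ne i (N-1) with rfl | h0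
    · rw [Function.update_self, Function.update_of_ne (by omega : N - 1 ≠ N)]
      have e : N - 1 + 1 = N := by omega
      rw [e, Function.update_self]
      exact hd
    · rw [Function.update_of_ne h0, Function.update_of_ne (by omega : i ≠ N),
        Function.update_of_ne (by omega : i + 1 ≠ N)]
      exact (hdd i hi).trans_le hε

lemma chain_delay {ε T s : ℝ} {N : ℕ} {x : ℕ → X} {t : ℕ → ℝ} {p q : X}
    (h : IsFlowChain φ ε (T + s) N x t p q) (hs : 0 ≤ s) :
    IsFlowChain φ ε T N (Function.update x 0 (φ s p)) (Function.update t 0 (t 0 - s)) (φ s p) q := by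
  obtain ⟨hN, hx0, hxN, ht, hdd⟩ := h
  refine ⟨hN, Function.update_self _ _ _, ?_, fun i hi => ?_, fun i hi => ?_⟩
  · rw [Function.update_of_ne (by omega)]; exact hxN
  · rcases eq_or_ne i 0 with rfl | h0
    · rw [Function.update_self]
      have := ht 0 hN
      linarith
    · rw [Function.update_of_ne h0]
      have := ht i hi
      linarith
  · rcases eq_or_ne i 0 with rfl | h0
    · rw [Function.update_self, Function.update_self, Function.update_of_ne (by omega)]
      have e : φ (t 0 - s) (φ s p) = φ (t 0) p := by
        rw [← φ.map_add]
        norm_num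
      rw [e, ← hx0]
      exact hdd 0 hN
    · rw [Function.update_of_ne h0, Function.update_of_ne h0, Function.update_of_ne (by omega)]
      exact hdd i hi

lemma cocycle_zero {a : ℝ → X → W} (ha : IsAddCocycle φ a) (x : X) : a 0 x = 0 := by
  have h := ha.2 0 0 x
  rw [add_zero, φ.map_zero_apply] at h
  exact (add_eq_left.mp h.symm)

lemma cocycle_nat_mul {a : ℝ → X → W} (ha : IsAddCocycle φ a) (u : X) (τ : ℝ) :
    ∀ k : ℕ, a ((k : ℝ) * τ) u = ∑ j ∈ Finset.range k, a τ (φ ((j : ℝ) * τ) u)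
  | 0 => by simpa using cocycle_zero ha u
  | (k+1) => by
      have h : ((k+1 : ℕ) : ℝ) * τ = τ + (k : ℝ) * τ := by push_cast; ring
      rw [h, ha.2 τ ((k:ℝ)*τ) u, Finset.sum_range_succ, cocycle_nat_mul ha u τ k]
      exact add_comm _ _

lemma cocycle_bound {a : ℝ → X → W} (ha : IsAddCocycle φ a) :
    ∃ K : ℝ, 1 ≤ K ∧ ∀ (x : X) (t : ℝ), 1 ≤ t → ‖a t x‖ ≤ K * t := by
  obtain ⟨C, hC⟩ := (isCompact_Icc.prod isCompact_univ).exists_bound_of_continuousOn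
    (s := Set.Icc (0:ℝ) 1 ×ˢ (Set.univ : Set X)) ha.1.continuousOn
  have key : ∀ n : ℕ, ∀ (x : X) (t : ℝ), 0 ≤ t → t ≤ (n:ℝ) + 1 → ‖a t x‖ ≤ C * ((n:ℝ) + 1) := by
    intro n
    induction n with
    | zero =>
      intro x t h0 h1
      have := hC (t, x) ⟨⟨h0, by simpa using h1⟩, Set.mem_univ _⟩
      simpa using this
    | succ n IH =>
      intro x t h0 h1
      have hC0 : 0 ≤ C := le_trans (norm_nonneg _) (hC ((0:ℝ), x) ⟨⟨le_refl _, zero_le_one⟩, Set.mem_univ _⟩)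
      rcases le_or_gt t ((n:ℝ)+1) with h2 | h2
      · calc ‖a t x‖ ≤ C * ((n:ℝ)+1) := IH x t h0 h2
          _ ≤ C * ((n:ℝ)+1+1) := by nlinarith
          _ = C * (((n+1:ℕ):ℝ)+1) := by push_cast; ring
      · have e : a t x = a (t - 1) (φ 1 x) + a 1 x := by
          have h3 := ha.2 (t-1) 1 x
          rw [sub_add_cancel] at h3
          exact h3
        have h3 : ‖a (t-1) (φ 1 x)‖ ≤ C * ((n:ℝ)+1) := by
          refine IH _ _ (by linarith) (by push_cast at h1 ⊢; linarith)
        have h4 : ‖a 1 x‖ ≤ C := hC ((1:ℝ), x) ⟨⟨zero_le_one, le_refl _⟩, Set.mem_univ _⟩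
        calc ‖a t x‖ ≤ ‖a (t-1) (φ 1 x)‖ + ‖a 1 x‖ := by rw [e]; exact norm_add_le _ _
          _ ≤ C * ((n:ℝ)+1) + C := by linarith
          _ = C * (((n+1:ℕ):ℝ)+1) := by push_cast; ring
  refine ⟨max (2*C) 1, le_max_right _ _, fun x t ht => ?_⟩
  have hC0 : 0 ≤ C := le_trans (norm_nonneg _) (hC ((0:ℝ), x) ⟨⟨le_refl _, zero_le_one⟩, Set.mem_univ _⟩)
  have h1 : t ≤ (⌊t⌋₊ : ℝ) + 1 := (Nat.lt_floor_add_one t).le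
  have h2 : (⌊t⌋₊ : ℝ) ≤ t := Nat.floor_le (by linarith)
  calc ‖a t x‖ ≤ C * ((⌊t⌋₊:ℝ) + 1) := key ⌊t⌋₊ x t (by linarith) h1
    _ ≤ (2*C) * t := by nlinarith
    _ ≤ max (2*C) 1 * t := by
        have := le_max_left (2*C) 1
        nlinarith

lemma flow_uc (φ : Flow ℝ X) (R ε : ℝ) (hε : 0 < ε) :
    ∃ δ > 0, ∀ s : ℝ, 0 ≤ s → s ≤ R → ∀ u v : X, dist u v < δ → dist (φ s u) (φ s v) < ε := by
  have huc : UniformContinuousOn (Function.uncurry φ.toFun) (Set.Icc 0 R ×ˢ Set.univ) :=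
    (isCompact_Icc.prod isCompact_univ).uniformContinuousOn_of_continuous φ.cont'.continuousOn
  rw [Metric.uniformContinuousOn_iff] at huc
  obtain ⟨δ, hδ, h⟩ := huc ε hε
  refine ⟨δ, hδ, fun s h0 hR u v huv => ?_⟩
  have hd : dist ((s,u) : ℝ × X) (s,v) < δ := by
    rw [Prod.dist_eq, dist_self]
    rw [max_eq_right dist_nonneg]
    exact huv
  exact h (s,u) ⟨⟨h0,hR⟩, Set.mem_univ _⟩ (s,v) ⟨⟨h0,hR⟩, Set.mem_univ _⟩ hd

lemma cocycle_uc {a : ℝ → X → W} (ha : IsAddCocycle φ a) (S R ρ : ℝ) (hρ : 0 < ρ) :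
    ∃ η > 0, ∀ t : ℝ, S ≤ t → t ≤ R → ∀ u v : X, dist u v < η → ‖a t u - a t v‖ ≤ ρ := by
  have huc : UniformContinuousOn (fun p : ℝ × X => a p.1 p.2) (Set.Icc S R ×ˢ Set.univ) :=
    (isCompact_Icc.prod isCompact_univ).uniformContinuousOn_of_continuous ha.1.continuousOn
  rw [Metric.uniformContinuousOn_iff] at huc
  obtain ⟨η, hη, h⟩ := huc ρ hρ
  refine ⟨η, hη, fun t hS hR u v huv => ?_⟩
  have hd : dist ((t,u) : ℝ × X) (t,v) < η := by
    rw [Prod.dist_eq, dist_self, max_eq_right dist_nonneg]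
    exact huv
  have := h (t,u) ⟨⟨hS,hR⟩, Set.mem_univ _⟩ (t,v) ⟨⟨hS,hR⟩, Set.mem_univ _⟩ hd
  rw [dist_eq_norm] at this
  exact this.le

lemma step_refine {a : ℝ → X → W} (ha : IsAddCocycle φ a) {ε T₀ t₀ : ℝ} {u v : X}
    (hT₀ : 0 < T₀) (ht : T₀ ≤ t₀) (hd : dist (φ t₀ u) v < ε) :
    ∃ (k : ℕ) (z : ℕ → X) (τ : ℝ),
      IsFlowChain φ ε T₀ k z (fun _ => τ) u v ∧ T₀ ≤ τ ∧ τ ≤ 2 * T₀ ∧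
      (∀ i < k, ∃ s, 0 ≤ s ∧ s ≤ t₀ ∧ z i = φ s u) ∧ (k : ℝ) * τ = t₀ ∧
      ∑ i ∈ Finset.range k, a τ (z i) = a t₀ u := by
  have hε : 0 < ε := lt_of_le_of_lt dist_nonneg hd
  have ht₀ : 0 < t₀ := lt_of_lt_of_le hT₀ ht
  set k := ⌊t₀ / T₀⌋₊ with hk
  have hk1 : 1 ≤ k := Nat.le_floor (by rw [Nat.cast_one, le_div_iff₀ hT₀]; linarith)
  have hkpos : (0:ℝ) < (k:ℝ) := by
    have : (1:ℝ) ≤ (k:ℝ) := by exact_mod_cast hk1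
    linarith
  set τ := t₀ / (k:ℝ) with hτ
  have hkτ : (k:ℝ) * τ = t₀ := by
    rw [hτ]; field_simp
  have hfl : (k : ℝ) ≤ t₀ / T₀ := Nat.floor_le (by positivity)
  have hτ1 : T₀ ≤ τ := by
    rw [hτ, le_div_iff₀ hkpos]
    have h5 : T₀ * (t₀ / T₀) = t₀ := by field_simp
    nlinarith
  have hτpos : 0 < τ := lt_of_lt_of_le hT₀ hτ1
  have hτ2 : τ ≤ 2 * T₀ := by
    have h2 : t₀ / T₀ < (k:ℝ) + 1 := Nat.lt_floor_add_one _
    rw [hτ, div_le_iff₀ hkpos]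
    rw [div_lt_iff₀ hT₀] at h2
    have hk2 : (1:ℝ) ≤ (k:ℝ) := by exact_mod_cast hk1
    nlinarith
  refine ⟨k, fun i => if i < k then φ ((i:ℝ) * τ) u else v, τ, ?_, hτ1, hτ2, ?_, hkτ, ?_⟩
  · refine ⟨hk1, ?_, ?_, fun i _ => hτ1, fun i hi => ?_⟩
    · beta_reduce
      rw [if_pos (by omega : 0 < k)]
      norm_num [φ.map_zero_apply]
    · beta_reduce
      rw [if_neg (by omega : ¬ (k < k))]
    · beta_reduce
      rw [if_pos hi]
      have e : φ τ (φ ((i:ℝ)*τ) u) = φ (((i+1:ℕ):ℝ)*τ) u := by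
        rw [← φ.map_add]
        congr 1
        push_cast; ring
      rcases lt_or_ge (i+1) k with h2 | h2
      · rw [if_pos h2, e, dist_self]
        exact hε
      · rw [if_neg (by omega : ¬ (i+1 < k)), e]
        have e2 : ((i+1:ℕ):ℝ) * τ = t₀ := by
          have e3 : i + 1 = k := by omega
          rw [e3]; exact hkτ
        rw [e2]; exact hd
  · intro i hi
    refine ⟨(i:ℝ) * τ, by positivity, ?_, by beta_reduce; rw [if_pos hi]⟩
    have h3 : (i:ℝ) ≤ (k:ℝ) := by exact_mod_cast hi.le
    nlinarith
  · calc ∑ i ∈ Finset.range k, a τ (if i < k then φ ((i:ℝ)*τ) u else v)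
        = ∑ i ∈ Finset.range k, a τ (φ ((i:ℝ)*τ) u) :=
          Finset.sum_congr rfl fun i hi => by beta_reduce; rw [if_pos (Finset.mem_range.1 hi)]
      _ = a ((k:ℝ)*τ) u := (cocycle_nat_mul ha u τ k).symm
      _ = a t₀ u := by rw [hkτ]

lemma chain_refine {a : ℝ → X → W} (ha : IsAddCocycle φ a) {ε T T₀ : ℝ}
    (hT₀ : 0 < T₀) (hTT : T₀ ≤ T) :
    ∀ (N : ℕ) (x : ℕ → X) (t : ℕ → ℝ) (p q : X), IsFlowChain φ ε T N x t p q →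
    ∃ (N' : ℕ) (x' : ℕ → X) (t' : ℕ → ℝ),
      IsFlowChain φ ε T₀ N' x' t' p q ∧
      (∀ i < N', T₀ ≤ t' i ∧ t' i ≤ 2 * T₀) ∧
      (∀ i < N', ∃ j < N, ∃ s, 0 ≤ s ∧ s ≤ t j ∧ x' i = φ s (x j)) ∧
      (∑ i ∈ Finset.range N', t' i) = (∑ i ∈ Finset.range N, t i) ∧
      (∑ i ∈ Finset.range N', a (t' i) (x' i)) = ∑ i ∈ Finset.range N, a (t i) (x i) := by
  intro N
  induction N with
  | zero => intro x t p q h; exact absurd h.1 (lt_irrefl 0)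
  | succ N IH =>
    intro x t p q h
    have hstep : dist (φ (t N) (x N)) (x (N+1)) < ε := h.2.2.2.2 N (by omega)
    have htN : T₀ ≤ t N := le_trans hTT (h.2.2.2.1 N (by omega))
    obtain ⟨k, z, τ, hkchain, hτ1, hτ2, horb, hkτ, hsum⟩ :=
      step_refine ha hT₀ htN (v := x (N+1)) hstep
    have hq : x (N+1) = q := h.2.2.1
    rcases Nat.eq_zero_or_pos N with rfl | hN
    · refine ⟨k, z, fun _ => τ, ?_, fun i _ => ⟨hτ1, hτ2⟩, ?_, ?_, ?_⟩
      · exact h.2.1 ▸ hq ▸ hkchain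
      · intro i hi
        obtain ⟨s, hs0, hs1, he⟩ := horb i hi
        exact ⟨0, by omega, s, hs0, hs1, he⟩
      · rw [Finset.sum_const, Finset.card_range, nsmul_eq_mul, hkτ, Finset.sum_range_one]
      · rw [hsum, Finset.sum_range_one]
    · have htr : IsFlowChain φ ε T N x t p (x N) := chain_take h hN (by omega)
      obtain ⟨N'', x'', t'', hch'', htt'', horb'', hsumt'', hsuma''⟩ := IH x t p (x N) htr
      refine ⟨N'' + k, cat N'' x'' z, cat N'' t'' (fun _ => τ), ?_, ?_, ?_, ?_, ?_⟩
      · exact chain_cat hch'' (hq ▸ hkchain)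
      · intro i hi
        rcases lt_or_ge i N'' with h1 | h1
        · rw [cat_lt h1]; exact htt'' i h1
        · rw [cat_ge h1]; exact ⟨hτ1, hτ2⟩
      · intro i hi
        rcases lt_or_ge i N'' with h1 | h1
        · rw [cat_lt h1]
          obtain ⟨j, hj, s, hs0, hs1, he⟩ := horb'' i h1
          exact ⟨j, by omega, s, hs0, hs1, he⟩
        · rw [cat_ge h1]
          obtain ⟨s, hs0, hs1, he⟩ := horb (i - N'') (by omega)
          exact ⟨N, by omega, s, hs0, hs1, he⟩
      · rw [sum_cat N'' k _ t'' (fun _ => τ) (fun i hi => cat_lt hi)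
          (fun i hi => cat_ge (Nat.le_add_right _ _)),
          Finset.sum_const, Finset.card_range, nsmul_eq_mul, hkτ, hsumt'',
          Finset.sum_range_succ]
      · rw [sum_cat N'' k _ (fun i => a (t'' i) (x'' i)) (fun i => a τ (z i))
          (fun i hi => by rw [cat_lt hi, cat_lt hi])
          (fun i hi => by rw [cat_ge (Nat.le_add_right _ _), cat_ge (Nat.le_add_right _ _),
            Nat.add_sub_cancel_left]),
          hsuma'', hsum, Finset.sum_range_succ]

lemma comp_invariant {M : Set X} (hM : IsChainComponent φ M) {x₀ : X} (hx : x₀ ∈ M)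
    {s : ℝ} (hs : 0 ≤ s) : φ s x₀ ∈ M := by
  have Hout : ∀ q ∈ M, ∀ ε > (0:ℝ), ∀ T > (0:ℝ),
      ∃ N x t, IsFlowChain φ ε T N x t (φ s x₀) q := by
    intro q hq ε hε T hT
    obtain ⟨N, x, t, hch⟩ := hM.1 x₀ hx q hq ε hε (T + s) (by linarith)
    exact ⟨N, _, _, chain_delay hch hs⟩
  have Hin : ∀ p ∈ M, ∀ ε > (0:ℝ), ∀ T > (0:ℝ),
      ∃ N x t, IsFlowChain φ ε T N x t p (φ s x₀) := by
    intro p hp ε hε T hT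
    obtain ⟨δ, hδ, hflow⟩ := flow_uc φ s ε hε
    obtain ⟨N, x, t, hch⟩ := hM.1 p hp x₀ hx (min δ ε) (lt_min hδ hε) T hT
    have hN := hch.1
    refine ⟨N, _, _, chain_extend_last hch (φ s x₀) hs ?_ (min_le_right _ _)⟩
    have e : φ (t (N-1) + s) (x (N-1)) = φ s (φ (t (N-1)) (x (N-1))) := by
      rw [add_comm, φ.map_add]
    rw [e]
    refine hflow s hs (le_refl s) _ _ ?_
    have hlast := hch.2.2.2.2 (N-1) (by omega)
    have eN : N - 1 + 1 = N := by omega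
    rw [eN, hch.2.2.1] at hlast
    exact lt_of_lt_of_le hlast (min_le_left _ _)
  have htrans : IsChainTransitiveSet φ (insert (φ s x₀) M) := by
    intro p hp q hq ε hε T hT
    rcases Set.mem_insert_iff.1 hp with rfl | hp' <;>
      rcases Set.mem_insert_iff.1 hq with hq' | hq'
    · obtain ⟨N1, x1, t1, h1⟩ := Hout x₀ hx ε hε T hT
      obtain ⟨N2, x2, t2, h2⟩ := Hin x₀ hx ε hε T hT
      rw [hq']
      exact ⟨_, _, _, chain_cat h1 h2⟩
    · exact Hout q hq' ε hε T hT
    · rw [hq']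
      exact Hin p hp' ε hε T hT
    · exact hM.1 p hp' q hq' ε hε T hT
  have heq := hM.2 _ htrans (Set.subset_insert _ _)
  rw [heq]
  exact Set.mem_insert _ _

lemma comp_isClosed {M : Set X} (hM : IsChainComponent φ M) : IsClosed M := by
  have htrans : IsChainTransitiveSet φ (closure M) := by
    intro p hp q hq ε hε T hT
    obtain ⟨δ, hδ, hflow⟩ := flow_uc φ T ε hε
    obtain ⟨p₀, hp₀, hpd⟩ := Metric.mem_closure_iff.1 hp δ hδ
    obtain ⟨q₀, hq₀, hqd⟩ := Metric.mem_closure_iff.1 hq (ε/2) (by linarith)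
    have hmid : φ T p₀ ∈ M := comp_invariant hM hp₀ (le_of_lt hT)
    obtain ⟨N, x, t, hch⟩ := hM.1 _ hmid q₀ hq₀ (ε/2) (by linarith) T hT
    have h1 : IsFlowChain φ ε T 1 (fun i => if i = 0 then p else φ T p₀) (fun _ => T)
        p (φ T p₀) :=
      chain_single (le_refl T) (hflow T hT.le (le_refl T) p p₀ hpd)
    have hqd' : dist q₀ q < ε/2 := by rw [dist_comm]; exact hqd
    have h2 := chain_retarget hch q (show ε/2 + dist q₀ q ≤ ε by linarith)
    exact ⟨_, _, _, chain_cat h1 h2⟩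
  have heq := hM.2 _ htrans subset_closure
  rw [heq]
  exact isClosed_closure

lemma confinement {Λ : Set X} (hΛ : IsChainComponent φ Λ) {U : Set X} (hU : IsOpen U)
    (hΛU : Λ ⊆ U) :
    ∃ ε₀ > (0:ℝ), ∃ T₀ > (0:ℝ), ∀ N x t p q, p ∈ Λ → q ∈ Λ →
      IsFlowChain φ ε₀ T₀ N x t p q →
      ∀ i < N, ∀ s : ℝ, 0 ≤ s → s ≤ t i → φ s (x i) ∈ U := by
  by_contra hcon
  push_neg at hcon
  have H : ∀ n : ℕ, ∃ (N : ℕ) (x : ℕ → X) (t : ℕ → ℝ) (p q : X),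
      p ∈ Λ ∧ q ∈ Λ ∧ IsFlowChain φ (1/((n:ℝ)+1)) ((n:ℝ)+1) N x t p q ∧
      ∃ i, i < N ∧ ∃ s : ℝ, 0 ≤ s ∧ s ≤ t i ∧ φ s (x i) ∉ U := by
    intro n
    obtain ⟨N, x, t, p, q, hp, hq, hch, i, hi, s, hs0, hs1, hout⟩ :=
      hcon (1/((n:ℝ)+1)) (by positivity) ((n:ℝ)+1) (by positivity)
    exact ⟨N, x, t, p, q, hp, hq, hch, i, hi, s, hs0, hs1, hout⟩
  choose N cx ct cp cq hpΛ hqΛ hch ci hci cs hs0 hs1 hout using H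
  have hwc : ∀ n, φ (cs n) (cx n (ci n)) ∈ Uᶜ := fun n => hout n
  obtain ⟨z, hzU, σ, hσ, hconv⟩ := (hU.isClosed_compl.isCompact).tendsto_subseq hwc
  -- selection of good indices
  have hsel : ∀ (δ : ℝ), 0 < δ → ∀ (R : ℝ), ∃ kk : ℕ,
      dist (φ (cs (σ kk)) (cx (σ kk) (ci (σ kk)))) z < δ ∧
      (1:ℝ)/((σ kk : ℝ)+1) < δ ∧ R ≤ ((σ kk : ℝ)+1) := by
    intro δ hδ R
    obtain ⟨m₀, hm₀⟩ := exists_nat_ge (max R (1/δ))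
    have hev1 : ∀ᶠ kk in atTop,
        dist (φ (cs (σ kk)) (cx (σ kk) (ci (σ kk)))) z < δ :=
      Metric.tendsto_nhds.mp hconv δ hδ
    obtain ⟨kk, h1, h2⟩ := (hev1.and (eventually_ge_atTop m₀)).exists
    have hσk : (m₀ : ℝ) ≤ (σ kk : ℝ) := by exact_mod_cast le_trans h2 hσ.le_apply
    have hR : R ≤ (σ kk : ℝ) := le_trans (le_trans (le_max_left _ _) hm₀) hσk
    have hd : 1/δ ≤ (σ kk : ℝ) := le_trans (le_trans (le_max_right _ _) hm₀) hσk
    refine ⟨kk, h1, ?_, by linarith⟩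
    rw [div_lt_iff₀ (by positivity)]
    have e : δ * (1/δ) = 1 := by field_simp
    nlinarith [mul_le_mul_of_nonneg_left hd hδ.le]
  -- chains from Λ to z
  have to_z : ∀ lam ∈ Λ, ∀ ε > (0:ℝ), ∀ T > (0:ℝ),
      ∃ Nh xh th, IsFlowChain φ ε T Nh xh th lam z := by
    intro lam hlam ε hε T hT
    obtain ⟨δ₁, hδ₁, hflow⟩ := flow_uc φ T (ε/2) (by linarith)
    obtain ⟨kk, hwz, hsmall, hbig⟩ := hsel (min δ₁ (ε/2)) (lt_min hδ₁ (by linarith)) T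
    set n := σ kk with hn
    have hwz2 : dist (φ (cs n) (cx n (ci n))) z < ε/2 := lt_of_lt_of_le hwz (min_le_right _ _)
    have hwz1 : dist (φ (cs n) (cx n (ci n))) z < δ₁ := lt_of_lt_of_le hwz (min_le_left _ _)
    have hsm2 : 1/((n:ℝ)+1) < ε/2 := lt_of_lt_of_le hsmall (min_le_right _ _)
    have hsm1 : 1/((n:ℝ)+1) < δ₁ := lt_of_lt_of_le hsmall (min_le_left _ _)
    have hsme : 1/((n:ℝ)+1) ≤ ε := by linarith
    have hchn := hch n
    have hNn := hchn.1
    obtain ⟨N2, x2, t2, hpre⟩ := hΛ.1 lam hlam (cp n) (hpΛ n) (min δ₁ ε) (lt_min hδ₁ hε) T hT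
    have hpre' : IsFlowChain φ ε T N2 x2 t2 lam (cp n) :=
      chain_mono hpre (min_le_right _ _) (le_refl _)
    rcases le_or_gt T (cs n) with hsT | hsT
    · -- single step of time cs n from cx n (ci n) to z
      have hstep : IsFlowChain φ ε T 1
          (fun i => if i = 0 then cx n (ci n) else z) (fun _ => cs n) (cx n (ci n)) z :=
        chain_single hsT (by linarith [hwz2])
      rcases Nat.eq_zero_or_pos (ci n) with hi0 | hi0
      · have e : cx n (ci n) = cp n := by rw [hi0]; exact hchn.2.1
        rw [e] at hstep
        exact ⟨_, _, _, chain_cat hpre' hstep⟩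
      · have hsub : IsFlowChain φ ε T (ci n) (cx n) (ct n) (cp n) (cx n (ci n)) :=
          chain_mono (chain_take hchn hi0 (le_of_lt (hci n))) hsme (by linarith)
        exact ⟨_, _, _, chain_cat hpre' (chain_cat hsub hstep)⟩
    · -- cs n < T : extend a previous step by cs n
      rcases Nat.eq_zero_or_pos (ci n) with hi0 | hi0
      · -- extend the transitivity chain (which ends at cp n = cx n 0)
        have hN2 := hpre.1
        refine ⟨_, _, _, chain_extend_last hpre z (hs0 n) ?_ (min_le_right _ _)⟩
        have e : φ (t2 (N2-1) + cs n) (x2 (N2-1)) = φ (cs n) (φ (t2 (N2-1)) (x2 (N2-1))) := by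
          rw [add_comm, φ.map_add]
        rw [e]
        have hlast := hpre.2.2.2.2 (N2-1) (by omega)
        have eN : N2 - 1 + 1 = N2 := by omega
        rw [eN, hpre.2.2.1] at hlast
        have h1 : dist (φ (cs n) (φ (t2 (N2-1)) (x2 (N2-1)))) (φ (cs n) (cp n)) < ε/2 :=
          hflow (cs n) (hs0 n) hsT.le _ _ (lt_of_lt_of_le hlast (min_le_left _ _))
        have h2 : dist (φ (cs n) (cp n)) z < ε/2 := by
          have e2 : cp n = cx n (ci n) := by rw [hi0]; exact hchn.2.1.symm
          rw [e2]
          exact hwz2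
        calc dist (φ (cs n) (φ (t2 (N2-1)) (x2 (N2-1)))) z
            ≤ dist (φ (cs n) (φ (t2 (N2-1)) (x2 (N2-1)))) (φ (cs n) (cp n))
              + dist (φ (cs n) (cp n)) z := dist_triangle _ _ _
          _ < ε := by linarith
      · -- extend the truncated chain
        have hsub : IsFlowChain φ (1/((n:ℝ)+1)) T (ci n) (cx n) (ct n) (cp n) (cx n (ci n)) :=
          chain_mono (chain_take hchn hi0 (le_of_lt (hci n))) (le_refl _) (by linarith)
        refine ⟨_, _, _, chain_cat hpre' (chain_extend_last hsub z (hs0 n) ?_ hsme)⟩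
        have e : φ (ct n (ci n - 1) + cs n) (cx n (ci n - 1))
            = φ (cs n) (φ (ct n (ci n - 1)) (cx n (ci n - 1))) := by
          rw [add_comm, φ.map_add]
        rw [e]
        have hlast := hchn.2.2.2.2 (ci n - 1) (lt_trans (Nat.sub_lt hi0 one_pos) (hci n))
        have eN : ci n - 1 + 1 = ci n := by omega
        rw [eN] at hlast
        have h1 : dist (φ (cs n) (φ (ct n (ci n - 1)) (cx n (ci n - 1))))
            (φ (cs n) (cx n (ci n))) < ε/2 :=
          hflow (cs n) (hs0 n) hsT.le _ _ (by linarith)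
        calc dist (φ (cs n) (φ (ct n (ci n - 1)) (cx n (ci n - 1)))) z
            ≤ dist (φ (cs n) (φ (ct n (ci n - 1)) (cx n (ci n - 1))))
              (φ (cs n) (cx n (ci n))) + dist (φ (cs n) (cx n (ci n))) z := dist_triangle _ _ _
          _ < ε := by linarith
  -- chains from z to Λ
  have from_z : ∀ lam ∈ Λ, ∀ ε > (0:ℝ), ∀ T > (0:ℝ),
      ∃ Nh xh th, IsFlowChain φ ε T Nh xh th z lam := by
    intro lam hlam ε hε T hT
    obtain ⟨δ₂, hδ₂, hflow⟩ := flow_uc φ (3*T) (ε/2) (by linarith)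
    obtain ⟨kk, hwz, hsmall, hbig⟩ := hsel (min δ₂ ε) (lt_min hδ₂ hε) (3*T)
    set n := σ kk with hn
    have hwz2 : dist (φ (cs n) (cx n (ci n))) z < δ₂ := lt_of_lt_of_le hwz (min_le_left _ _)
    have hzw : dist z (φ (cs n) (cx n (ci n))) < δ₂ := by rw [dist_comm]; exact hwz2
    have hsm1 : 1/((n:ℝ)+1) < δ₂ := lt_of_lt_of_le hsmall (min_le_left _ _)
    have hsm2 : 1/((n:ℝ)+1) < ε := lt_of_lt_of_le hsmall (min_le_right _ _)
    have hchn := hch n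
    have hNn := hchn.1
    have htimes : ∀ i < N n, 3*T ≤ ct n i := fun i hi => le_trans hbig (hchn.2.2.2.1 i hi)
    have hpost := hΛ.1 (cq n) (hqΛ n) lam hlam ε hε T hT
    -- finishing: from a chain z → cx n r with 0 < r ≤ N n produce chain z → lam
    have hfinish : ∀ r, r ≤ N n → ∀ (Nh : ℕ) (xh : ℕ → X) (th : ℕ → ℝ),
        IsFlowChain φ ε T Nh xh th z (cx n r) →
        ∃ N' x' t', IsFlowChain φ ε T N' x' t' z lam := by
      intro r hr Nh xh th hhead
      obtain ⟨N3, x3, t3, hp3⟩ := hpost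
      rcases lt_or_eq_of_le hr with hr' | hr'
      · have hmid : IsFlowChain φ ε T (N n - r) _ _ (cx n r) (cq n) :=
          chain_mono (chain_drop hchn hr') hsm2.le (by linarith)
        exact ⟨_, _, _, chain_cat hhead (chain_cat hmid hp3)⟩
      · have e : cx n r = cq n := by rw [hr']; exact hchn.2.2.1
        rw [e] at hhead
        exact ⟨_, _, _, chain_cat hhead hp3⟩
    have hcs := hs1 n   -- cs n ≤ ct n (ci n)
    rcases le_or_gt (cs n + 2*T) (ct n (ci n)) with hA | hB
    · -- case A : two-step head, landing at cx n (ci n + 1)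
      have hstep1 : IsFlowChain φ ε T 1
          (fun i => if i = 0 then z else φ T (φ (cs n) (cx n (ci n)))) (fun _ => T)
          z (φ T (φ (cs n) (cx n (ci n)))) :=
        chain_single (le_refl T) (by
          have := hflow T hT.le (by linarith) z (φ (cs n) (cx n (ci n))) hzw
          linarith)
      have hstep2 : IsFlowChain φ ε T 1
          (fun i => if i = 0 then φ T (φ (cs n) (cx n (ci n))) else cx n (ci n + 1))
          (fun _ => ct n (ci n) - cs n - T)
          (φ T (φ (cs n) (cx n (ci n)))) (cx n (ci n + 1)) := by
        refine chain_single (by linarith) ?_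
        have e : φ (ct n (ci n) - cs n - T) (φ T (φ (cs n) (cx n (ci n))))
            = φ (ct n (ci n)) (cx n (ci n)) := by
          rw [← φ.map_add, ← φ.map_add]
          congr 1
          ring
        rw [e]
        exact lt_trans (hchn.2.2.2.2 (ci n) (hci n)) hsm2
      exact hfinish (ci n + 1) (hci n) _ _ _ (chain_cat hstep1 hstep2)
    · -- case B : single-step head of time (ct n (ci n) - cs n) + T
      set j := ci n + 1 with hj
      have hstep1 : IsFlowChain φ ε T 1
          (fun i => if i = 0 then z else φ T (cx n j)) (fun _ => (ct n (ci n) - cs n) + T)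
          z (φ T (cx n j)) := by
        refine chain_single (by linarith) ?_
        have e : φ ((ct n (ci n) - cs n) + T) z = φ ((ct n (ci n) - cs n) + T) z := rfl
        have h1 : dist (φ ((ct n (ci n) - cs n) + T) z)
            (φ ((ct n (ci n) - cs n) + T) (φ (cs n) (cx n (ci n)))) < ε/2 :=
          hflow _ (by linarith) (by linarith) _ _ hzw
        have e2 : φ ((ct n (ci n) - cs n) + T) (φ (cs n) (cx n (ci n)))
            = φ T (φ (ct n (ci n)) (cx n (ci n))) := by
          rw [← φ.map_add, ← φ.map_add]
          congr 1
          ring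
        have h2 : dist (φ T (φ (ct n (ci n)) (cx n (ci n)))) (φ T (cx n j)) < ε/2 :=
          hflow T hT.le (by linarith) _ _ (lt_trans (hchn.2.2.2.2 (ci n) (hci n)) hsm1)
        have h1' : dist (φ ((ct n (ci n) - cs n) + T) z)
            (φ T (φ (ct n (ci n)) (cx n (ci n)))) < ε/2 := by rw [← e2]; exact h1
        calc dist (φ ((ct n (ci n) - cs n) + T) z) (φ T (cx n j))
            ≤ dist (φ ((ct n (ci n) - cs n) + T) z)
                (φ T (φ (ct n (ci n)) (cx n (ci n))))
              + dist (φ T (φ (ct n (ci n)) (cx n (ci n)))) (φ T (cx n j)) :=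
              dist_triangle _ _ _
          _ < ε := by linarith
      rcases lt_or_eq_of_le (Nat.succ_le_of_lt (hci n)) with hjN | hjN
      · -- j < N n : one more step to cx n (j+1)
        have hstep2 : IsFlowChain φ ε T 1
            (fun i => if i = 0 then φ T (cx n j) else cx n (j + 1))
            (fun _ => ct n j - T) (φ T (cx n j)) (cx n (j + 1)) := by
          refine chain_single (by linarith [htimes j (by omega : j < N n)]) ?_
          have e : φ (ct n j - T) (φ T (cx n j)) = φ (ct n j) (cx n j) := by
            rw [← φ.map_add]
            congr 1
            ring
          rw [e]
          exact lt_trans (hchn.2.2.2.2 j (by omega : j < N n)) hsm2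
        exact hfinish (j + 1) (by omega : j + 1 ≤ N n) _ _ _ (chain_cat hstep1 hstep2)
      · -- j = N n : head already ends at φ T (cq n) ∈ Λ
        obtain ⟨N4, x4, t4, hp4⟩ :=
          hΛ.1 (φ T (cq n)) (comp_invariant hΛ (hqΛ n) hT.le) lam hlam ε hε T hT
        have e : cx n j = cq n := by
          have ejN : j = N n := by omega
          rw [ejN]; exact hchn.2.2.1
        rw [e] at hstep1
        exact ⟨_, _, _, chain_cat hstep1 hp4⟩
  -- insert z Λ is chain transitive, contradicting maximality
  have htrans : IsChainTransitiveSet φ (insert z Λ) := by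
    intro p hp q hq ε hε T hT
    rcases Set.mem_insert_iff.1 hp with rfl | hp' <;>
      rcases Set.mem_insert_iff.1 hq with hq' | hq'
    · obtain ⟨N1, x1, t1, h1⟩ := from_z (cp 0) (hpΛ 0) ε hε T hT
      obtain ⟨N2, x2, t2, h2⟩ := to_z (cp 0) (hpΛ 0) ε hε T hT
      rw [hq']
      exact ⟨_, _, _, chain_cat h1 h2⟩
    · exact from_z q hq' ε hε T hT
    · rw [hq']
      exact to_z p hp' ε hε T hT
    · exact hΛ.1 p hp' q hq' ε hε T hT
  have heq := hΛ.2 _ htrans (Set.subset_insert _ _)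
  have hmem : z ∈ Λ := by rw [heq]; exact Set.mem_insert _ _
  exact hzU (hΛU hmem)

lemma uniform_trans {M : Set X} (hM : IsChainComponent φ M) {a : ℝ → X → W}
    (ha : IsAddCocycle φ a) {ε T : ℝ} (hε : 0 < ε) (hT : 0 < T) :
    ∃ C : ℝ, 0 ≤ C ∧ ∀ p ∈ M, ∀ q ∈ M, ∃ N x t, IsFlowChain φ ε T N x t p q ∧
      (∑ i ∈ Finset.range N, t i) ≤ C ∧ (∑ i ∈ Finset.range N, ‖a (t i) (x i)‖) ≤ C := by
  have key : ∀ w : X × X, ∃ (D : ℝ) (O : Set (X × X)), 0 ≤ D ∧ O ∈ 𝓝 w ∧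
      (w ∈ M ×ˢ M → ∀ p q : X, (p, q) ∈ O → ∃ N x t, IsFlowChain φ ε T N x t p q ∧
        (∑ i ∈ Finset.range N, t i) ≤ D ∧ (∑ i ∈ Finset.range N, ‖a (t i) (x i)‖) ≤ D) := by
    intro w
    by_cases hw : w ∈ M ×ˢ M
    · obtain ⟨hw1, hw2⟩ := hw
      obtain ⟨N, x, t, hch⟩ := hM.1 w.1 hw1 w.2 hw2 (ε/3) (by linarith) T hT
      have hN := hch.1
      obtain ⟨δ, hδ, hflow⟩ := flow_uc φ (t 0) (ε/3) (by linarith)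
      have hconta : Continuous fun y : X => a (t 0) y :=
        ha.1.comp (continuous_const.prodMk continuous_id)
      obtain ⟨A, hA⟩ := isCompact_univ.exists_bound_of_continuousOn hconta.continuousOn
      have hA0 : 0 ≤ A := le_trans (norm_nonneg _) (hA (x 0) (Set.mem_univ _))
      have htsum0 : 0 ≤ ∑ i ∈ Finset.range N, t i :=
        Finset.sum_nonneg fun i hi =>
          le_trans hT.le (hch.2.2.2.1 i (Finset.mem_range.1 hi))
      have hnsum0 : 0 ≤ ∑ i ∈ Finset.range N, ‖a (t i) (x i)‖ :=
        Finset.sum_nonneg fun i _ => norm_nonneg _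
      refine ⟨(∑ i ∈ Finset.range N, t i) + (A + ∑ i ∈ Finset.range N, ‖a (t i) (x i)‖),
        Metric.ball w.1 (min δ (ε/3)) ×ˢ Metric.ball w.2 (ε/3), by linarith, ?_, fun _ => ?_⟩
      · exact prod_mem_nhds (Metric.ball_mem_nhds _ (lt_min hδ (by linarith)))
          (Metric.ball_mem_nhds _ (by linarith))
      · intro p q hpq
        obtain ⟨hp, hq⟩ := hpq
        rw [Metric.mem_ball] at hp hq
        have hqd : dist w.2 q < ε/3 := by rw [dist_comm]; exact hq
        have h2 : IsFlowChain φ (ε/3 + ε/3) T N (Function.update x N q) t w.1 q :=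
          chain_retarget hch q (le_of_lt (by linarith))
        have hflowp : dist (φ (t 0) p) (φ (t 0) w.1) < ε/3 := by
          refine hflow (t 0) (le_trans hT.le (hch.2.2.2.1 0 hN)) (le_refl _) p w.1
            (lt_of_lt_of_le hp (min_le_left _ _))
        have hstep0 : dist (φ (t 0) (x 0)) (x 1) < ε/3 := hch.2.2.2.2 0 hN
        have hdd : dist (φ (t 0) p) (Function.update x N q 1) < ε := by
          rcases eq_or_ne 1 N with h1N | h1N
          · rw [h1N, Function.update_self]
            have hx1 : x 1 = w.2 := by rw [h1N]; exact hch.2.2.1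
            calc dist (φ (t 0) p) q
                ≤ dist (φ (t 0) p) (φ (t 0) w.1) + dist (φ (t 0) w.1) (x 1)
                  + dist (x 1) q := dist_triangle4 _ _ _ _
              _ < ε := by
                  rw [hch.2.1, hx1] at hstep0
                  rw [hx1]
                  linarith
          · rw [Function.update_of_ne h1N]
            calc dist (φ (t 0) p) (x 1)
                ≤ dist (φ (t 0) p) (φ (t 0) w.1) + dist (φ (t 0) w.1) (x 1) :=
                  dist_triangle _ _ _
              _ < ε := by
                  rw [hch.2.1] at hstep0
                  linarith
        have h3 := chain_changehead h2 p hdd (by linarith)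
        refine ⟨N, _, _, h3, by linarith, ?_⟩
        obtain ⟨n', rfl⟩ : ∃ n', N = n' + 1 := ⟨N - 1, by omega⟩
        rw [Finset.sum_range_succ'
          (fun i => ‖a (t i) (Function.update (Function.update x (n'+1) q) 0 p i)‖) n',
          Finset.sum_range_succ' (fun i => ‖a (t i) (x i)‖) n']
        have he1 : ∀ i < n',
            Function.update (Function.update x (n'+1) q) 0 p (i+1) = x (i+1) := by
          intro i hi
          rw [Function.update_of_ne (by omega), Function.update_of_ne (by omega)]
        have he0 : Function.update (Function.update x (n'+1) q) 0 p 0 = p :=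
          Function.update_self _ _ _
        rw [he0]
        have hsc : ∑ i ∈ Finset.range n',
            ‖a (t (i+1)) (Function.update (Function.update x (n'+1) q) 0 p (i+1))‖
            = ∑ i ∈ Finset.range n', ‖a (t (i+1)) (x (i+1))‖ :=
          Finset.sum_congr rfl fun i hi => by rw [he1 i (Finset.mem_range.1 hi)]
        rw [hsc]
        have hAp : ‖a (t 0) p‖ ≤ A := hA p (Set.mem_univ _)
        have h00 : 0 ≤ ‖a (t 0) (x 0)‖ := norm_nonneg _
        linarith
    · exact ⟨0, Set.univ, le_refl 0, Filter.univ_mem, fun h => absurd h hw⟩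
  choose fD fO hD0 hnhds hprop using key
  obtain ⟨F, hFs, hcover⟩ :=
    (((comp_isClosed hM).isCompact).prod ((comp_isClosed hM).isCompact)).elim_nhds_subcover
      fO (fun w _ => hnhds w)
  refine ⟨∑ w ∈ F, fD w, Finset.sum_nonneg fun w _ => hD0 w, fun p hp q hq => ?_⟩
  have hmem : ((p, q) : X × X) ∈ M ×ˢ M := ⟨hp, hq⟩
  obtain ⟨w, hwF, hwO⟩ := Set.mem_iUnion₂.1 (hcover hmem)
  obtain ⟨N, x, t, hch, h1, h2⟩ := hprop w (hFs w hwF) p q hwO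
  have hle : fD w ≤ ∑ w ∈ F, fD w := Finset.single_le_sum (fun w _ => hD0 w) hwF
  exact ⟨N, x, t, hch, le_trans h1 hle, le_trans h2 hle⟩

end MorseSpecAux

open MorseSpecAux

set_option maxHeartbeats 3000000

/-- If `π : E → E'` intertwines the flows, `p : V →ₗ[ℝ] V'` intertwines the
cocycles (`b t (π x) = p (a t x)`), `M` is a chain component of `φ` and `π(M)`
is a chain component of `φ'`, then the Morse spectrum of `π(M)` for `b` is the
image under `p` of the Morse spectrum of `M` for `a`. -/
theorem morseSpec_image (φ : Flow ℝ E) (a : ℝ → E → V) (ha : IsAddCocycle φ a)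
    {E' : Type*} [MetricSpace E'] [CompactSpace E']
    {V' : Type*} [NormedAddCommGroup V'] [NormedSpace ℝ V'] [FiniteDimensional ℝ V']
    (φ' : Flow ℝ E') (b : ℝ → E' → V') (hb : IsAddCocycle φ' b)
    (π : E → E') (hπ : Continuous π) (hequi : ∀ (t : ℝ) (x : E), π (φ t x) = φ' t (π x))
    (p : V →ₗ[ℝ] V') (hrel : ∀ (t : ℝ) (x : E), b t (π x) = p (a t x))
    (M : Set E) (hM : IsChainComponent φ M) (hM' : IsChainComponent φ' (π '' M)) :
    morseSpec φ' b (π '' M) = p '' morseSpec φ a M := by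
  classical
  have hpcont : Continuous p := p.continuous_of_finiteDimensional
  set pc := LinearMap.toContinuousLinearMap p with hpcdef
  have hpcoe : ∀ u : V, pc u = p u := fun u => by simp [hpcdef]
  apply Set.Subset.antisymm
  · -- hard direction
    intro w hw
    simp only [morseSpec, Set.mem_iInter] at hw
    obtain ⟨Ka, hKa1, hKa⟩ := cocycle_bound (φ := φ) ha
    obtain ⟨Kb, hKb1, hKb⟩ := cocycle_bound (φ := φ') hb
    have hKa0 : (0:ℝ) ≤ Ka := by linarith
    have hKb0 : (0:ℝ) ≤ Kb := by linarith
    have key : ∀ m : ℕ, ∃ v : V, ‖v‖ ≤ Ka + 1 ∧ ‖pc v - w‖ ≤ 2/((m:ℝ)+1) ∧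
        ∃ N x t, ∃ pe ∈ M, ∃ qe ∈ M,
          IsFlowChain φ (1/((m:ℝ)+1)) ((m:ℝ)+1) N x t pe qe ∧ v = chainExp a N x t := by
      intro m
      set εm := 1/((m:ℝ)+1) with hεmdef
      set Tm := (m:ℝ)+1 with hTmdef
      have hεm0 : 0 < εm := by rw [hεmdef]; positivity
      have hTm1 : 1 ≤ Tm := by rw [hTmdef]; have : (0:ℝ) ≤ (m:ℝ) := Nat.cast_nonneg m; linarith
      have hTm0 : 0 < Tm := by linarith
      obtain ⟨C, hC0, hCtrans⟩ := uniform_trans hM ha hεm0 hTm0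
      set R := 1 + ‖pc‖ * C + Kb * C with hRdef
      have hpc0 : (0:ℝ) ≤ ‖pc‖ := norm_nonneg _
      have hR1 : 1 ≤ R := by rw [hRdef]; nlinarith
      have hR0 : 0 < R := by linarith
      set S := max (max Tm C) (Tm * R) with hSdef
      have hSTm : Tm ≤ S := le_trans (le_max_left _ _) (le_max_left _ _)
      have hSC : C ≤ S := le_trans (le_max_right _ _) (le_max_left _ _)
      have hS1 : 1 ≤ S := le_trans hTm1 hSTm
      have hS0 : 0 < S := by linarith
      have hSR : Tm * R ≤ S := le_max_right _ _
      obtain ⟨η, hη, hηuc⟩ := cocycle_uc hb S (2*S) 1 one_pos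
      set U : Set E' := ⋃ y ∈ M, Metric.ball (π y) η with hUdef
      have hUopen : IsOpen U := isOpen_biUnion fun y _ => Metric.isOpen_ball
      have hUsup : π '' M ⊆ U := by
        rintro _ ⟨y, hy, rfl⟩
        exact Set.mem_biUnion hy (Metric.mem_ball_self hη)
      obtain ⟨ε₀, hε₀, T₀, hT₀, hconf⟩ := confinement hM' hUopen hUsup
      set S' := max S T₀ with hS'def
      have hS'0 : 0 < S' := lt_of_lt_of_le hS0 (le_max_left _ _)
      have hw1 := hw ε₀ hε₀ S' hS'0
      obtain ⟨lam1, hlam1mem, hlam1d⟩ := Metric.mem_closure_iff.1 hw1 (1/Tm) (by positivity)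
      obtain ⟨N₁, x₁, t₁, pe', hpe', qe', hqe', hch₁, hlamdef⟩ := hlam1mem
      have hconf₁ := hconf N₁ x₁ t₁ pe' qe' hpe' hqe'
        (chain_mono hch₁ (le_refl _) (le_max_right _ _))
      obtain ⟨N₂, x₂, t₂, hch₂, htt₂, horb₂, hsumt₂, hsumb₂⟩ :=
        chain_refine hb hS0 (le_max_left S T₀) N₁ x₁ t₁ pe' qe' hch₁
      have hN₂ := hch₂.1
      have hexp : chainExp b N₂ x₂ t₂ = lam1 := by
        rw [hlamdef]
        simp only [chainExp, hsumt₂, hsumb₂]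
      have hU₂ : ∀ i < N₂, x₂ i ∈ U := by
        intro i hi
        obtain ⟨j, hj, s, hs0, hs1, he⟩ := horb₂ i hi
        rw [he]
        exact hconf₁ j hj s hs0 hs1
      have hlift : ∀ i : ℕ, ∃ yy, yy ∈ M ∧ (i < N₂ → dist (π yy) (x₂ i) < η) := by
        intro i
        rcases lt_or_ge i N₂ with hi | hi
        · obtain ⟨yy, hy, hyd⟩ := Set.mem_iUnion₂.1 (hU₂ i hi)
          rw [Metric.mem_ball] at hyd
          exact ⟨yy, hy, fun _ => by rw [dist_comm]; exact hyd⟩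
        · obtain ⟨y0, hy0, _⟩ := hpe'
          exact ⟨y0, hy0, fun h => absurd h (by omega)⟩
      choose y hyM hyd using hlift
      have hconn : ∀ j : ℕ, ∃ (Nc : ℕ) (xc : ℕ → E) (tc : ℕ → ℝ), j < N₂ →
          IsFlowChain φ εm Tm Nc xc tc (φ (t₂ j) (y j)) (y (j+1)) ∧
          (∑ i ∈ Finset.range Nc, tc i) ≤ C ∧
          (∑ i ∈ Finset.range Nc, ‖a (tc i) (xc i)‖) ≤ C := by
        intro j
        rcases lt_or_ge j N₂ with hj | hj
        · have htj0 : (0:ℝ) ≤ t₂ j := le_trans hS0.le (htt₂ j hj).1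
          obtain ⟨Nc, xc, tc, h1, h2, h3⟩ :=
            hCtrans _ (comp_invariant hM (hyM j) htj0) _ (hyM (j+1))
          exact ⟨Nc, xc, tc, fun _ => ⟨h1, h2, h3⟩⟩
        · exact ⟨1, fun _ => y 0, fun _ => 0, fun h => absurd h (by omega)⟩
      choose Nc xc tc hconn using hconn
      -- one block: main step j followed by connector
      have Dblock : ∀ j, j < N₂ → ∃ (Nd : ℕ) (xd : ℕ → E) (td : ℕ → ℝ),
          IsFlowChain φ εm Tm Nd xd td (y j) (y (j+1)) ∧
          t₂ j ≤ (∑ i ∈ Finset.range Nd, td i) ∧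
          (∑ i ∈ Finset.range Nd, td i) ≤ t₂ j + C ∧
          ‖(∑ i ∈ Finset.range Nd, a (td i) (xd i)) - a (t₂ j) (y j)‖ ≤ C := by
        intro j hj
        obtain ⟨hcc, hct, hca⟩ := hconn j hj
        have htj : Tm ≤ t₂ j := le_trans hSTm (htt₂ j hj).1
        have hstep : IsFlowChain φ εm Tm 1 (fun i => if i = 0 then y j else φ (t₂ j) (y j))
            (fun _ => t₂ j) (y j) (φ (t₂ j) (y j)) :=
          chain_single htj (by rw [dist_self]; exact hεm0)
        have hDt : (∑ i ∈ Finset.range (1 + Nc j), cat 1 (fun _ => t₂ j) (tc j) i)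
            = t₂ j + ∑ i ∈ Finset.range (Nc j), tc j i := by
          have hh := sum_cat 1 (Nc j) (cat 1 (fun _ => t₂ j) (tc j)) (fun _ => t₂ j) (tc j)
            (fun i hi => cat_lt hi)
            (fun i hi => by
              rw [cat_ge (Nat.le_add_right 1 i)]
              congr 1
              omega)
          rw [hh, Finset.sum_range_one]
        have hDa : (∑ i ∈ Finset.range (1 + Nc j),
            a (cat 1 (fun _ => t₂ j) (tc j) i)
              (cat 1 (fun i => if i = 0 then y j else φ (t₂ j) (y j)) (xc j) i))
            = a (t₂ j) (y j) + ∑ i ∈ Finset.range (Nc j), a (tc j i) (xc j i) := by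
          have hh := sum_cat 1 (Nc j)
            (fun i => a (cat 1 (fun _ => t₂ j) (tc j) i)
              (cat 1 (fun i => if i = 0 then y j else φ (t₂ j) (y j)) (xc j) i))
            (fun _ => a (t₂ j) (y j)) (fun i => a (tc j i) (xc j i))
            (fun i hi => by
              have hi0 : i = 0 := by omega
              subst hi0
              beta_reduce
              rw [cat_lt (by omega : (0:ℕ) < 1), cat_lt (by omega : (0:ℕ) < 1)]
              norm_num)
            (fun i hi => by
              have e : 1 + i - 1 = i := by omega
              beta_reduce
              rw [cat_ge (Nat.le_add_right 1 i), cat_ge (Nat.le_add_right 1 i), e])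
          rw [hh, Finset.sum_range_one]
        have hsumtc0 : (0:ℝ) ≤ ∑ i ∈ Finset.range (Nc j), tc j i :=
          Finset.sum_nonneg fun i hi =>
            le_trans hTm0.le (hcc.2.2.2.1 i (Finset.mem_range.1 hi))
        refine ⟨1 + Nc j, _, _, chain_cat hstep hcc, ?_, ?_, ?_⟩
        · rw [hDt]; linarith
        · rw [hDt]; linarith
        · rw [hDa]
          have e : a (t₂ j) (y j) + (∑ i ∈ Finset.range (Nc j), a (tc j i) (xc j i))
              - a (t₂ j) (y j) = ∑ i ∈ Finset.range (Nc j), a (tc j i) (xc j i) := by abel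
          rw [e]
          exact le_trans (norm_sum_le _ _) hca
      -- build the full chain by induction
      have build : ∀ n, 1 ≤ n → n ≤ N₂ → ∃ (Nz : ℕ) (xz : ℕ → E) (tz : ℕ → ℝ),
          IsFlowChain φ εm Tm Nz xz tz (y 0) (y n) ∧
          (∑ j ∈ Finset.range n, t₂ j) ≤ (∑ i ∈ Finset.range Nz, tz i) ∧
          (∑ i ∈ Finset.range Nz, tz i) ≤ (∑ j ∈ Finset.range n, t₂ j) + (n:ℝ) * C ∧
          ‖(∑ i ∈ Finset.range Nz, a (tz i) (xz i))
            - ∑ j ∈ Finset.range n, a (t₂ j) (y j)‖ ≤ (n:ℝ) * C := by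
        intro n hn1
        induction n, hn1 using Nat.le_induction with
        | base =>
          intro h1N
          obtain ⟨Nd, xd, td, hch, h1, h2, h3⟩ := Dblock 0 (by omega)
          refine ⟨Nd, xd, td, hch, ?_, ?_, ?_⟩ <;>
            simp only [Finset.sum_range_one, Nat.cast_one, one_mul]
          · exact h1
          · exact h2
          · exact h3
        | succ n hn1 IH =>
          intro hnN
          obtain ⟨Nz, xz, tz, hchz, hz1, hz2, hz3⟩ := IH (by omega)
          obtain ⟨Nd, xd, td, hchd, hd1, hd2, hd3⟩ := Dblock n (by omega)
          have hsums : (∑ i ∈ Finset.range (Nz + Nd), cat Nz tz td i)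
              = (∑ i ∈ Finset.range Nz, tz i) + ∑ i ∈ Finset.range Nd, td i :=
            sum_cat Nz Nd (cat Nz tz td) tz td (fun i hi => cat_lt hi)
              (fun i hi => by rw [cat_ge (Nat.le_add_right _ _), Nat.add_sub_cancel_left])
          have hsuma : (∑ i ∈ Finset.range (Nz + Nd),
              a (cat Nz tz td i) (cat Nz xz xd i))
              = (∑ i ∈ Finset.range Nz, a (tz i) (xz i))
                + ∑ i ∈ Finset.range Nd, a (td i) (xd i) :=
            sum_cat Nz Nd (fun i => a (cat Nz tz td i) (cat Nz xz xd i))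
              (fun i => a (tz i) (xz i)) (fun i => a (td i) (xd i))
              (fun i hi => by beta_reduce; rw [cat_lt hi, cat_lt hi])
              (fun i hi => by beta_reduce; rw [cat_ge (Nat.le_add_right _ _),
                cat_ge (Nat.le_add_right _ _), Nat.add_sub_cancel_left])
          refine ⟨Nz + Nd, _, _, chain_cat hchz hchd, ?_, ?_, ?_⟩
          · rw [hsums, Finset.sum_range_succ]
            linarith
          · rw [hsums, Finset.sum_range_succ]
            push_cast
            linarith
          · rw [hsuma, Finset.sum_range_succ]
            have e : (∑ i ∈ Finset.range Nz, a (tz i) (xz i))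
                + (∑ i ∈ Finset.range Nd, a (td i) (xd i))
                - ((∑ j ∈ Finset.range n, a (t₂ j) (y j)) + a (t₂ n) (y n))
                = ((∑ i ∈ Finset.range Nz, a (tz i) (xz i))
                    - ∑ j ∈ Finset.range n, a (t₂ j) (y j))
                  + ((∑ i ∈ Finset.range Nd, a (td i) (xd i)) - a (t₂ n) (y n)) := by abel
            rw [e]
            calc ‖_ + _‖ ≤ _ + _ := norm_add_le _ _
              _ ≤ (n:ℝ) * C + C := add_le_add hz3 hd3
              _ = ((n+1:ℕ):ℝ) * C := by push_cast; ring
      obtain ⟨Nz, xz, tz, hchz, hz1, hz2, hz3⟩ := build N₂ hN₂ (le_refl _)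
      set Θ := ∑ j ∈ Finset.range N₂, t₂ j with hΘdef
      set D := ∑ i ∈ Finset.range Nz, tz i with hDdef
      set G := ∑ j ∈ Finset.range N₂, a (t₂ j) (y j) with hGdef
      set Az := ∑ i ∈ Finset.range Nz, a (tz i) (xz i) with hAzdef
      set B := ∑ j ∈ Finset.range N₂, b (t₂ j) (x₂ j) with hBdef
      have hN₂R : (1:ℝ) ≤ (N₂:ℝ) := by exact_mod_cast hN₂
      have hΘS : (N₂:ℝ) * S ≤ Θ := by
        rw [hΘdef]
        calc (N₂:ℝ) * S = ∑ _j ∈ Finset.range N₂, S := by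
              rw [Finset.sum_const, Finset.card_range, nsmul_eq_mul]
          _ ≤ ∑ j ∈ Finset.range N₂, t₂ j :=
              Finset.sum_le_sum fun j hj => (htt₂ j (Finset.mem_range.1 hj)).1
      have hΘ0 : 0 < Θ := lt_of_lt_of_le (mul_pos (lt_of_lt_of_le one_pos hN₂R) hS0) hΘS
      have hD0 : 0 < D := lt_of_lt_of_le hΘ0 hz1
      have hDN : (N₂:ℝ) * S ≤ D := le_trans hΘS hz1
      have hGnorm : ‖G‖ ≤ Ka * Θ := by
        rw [hGdef, hΘdef]
        calc ‖∑ j ∈ Finset.range N₂, a (t₂ j) (y j)‖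
            ≤ ∑ j ∈ Finset.range N₂, ‖a (t₂ j) (y j)‖ := norm_sum_le _ _
          _ ≤ ∑ j ∈ Finset.range N₂, Ka * t₂ j := Finset.sum_le_sum fun j hj =>
              hKa (y j) (t₂ j) (le_trans hS1 (htt₂ j (Finset.mem_range.1 hj)).1)
          _ = Ka * ∑ j ∈ Finset.range N₂, t₂ j := by rw [Finset.mul_sum]
      have hBnorm : ‖B‖ ≤ Kb * Θ := by
        rw [hBdef, hΘdef]
        calc ‖∑ j ∈ Finset.range N₂, b (t₂ j) (x₂ j)‖
            ≤ ∑ j ∈ Finset.range N₂, ‖b (t₂ j) (x₂ j)‖ := norm_sum_le _ _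
          _ ≤ ∑ j ∈ Finset.range N₂, Kb * t₂ j := Finset.sum_le_sum fun j hj =>
              hKb (x₂ j) (t₂ j) (le_trans hS1 (htt₂ j (Finset.mem_range.1 hj)).1)
          _ = Kb * ∑ j ∈ Finset.range N₂, t₂ j := by rw [Finset.mul_sum]
      have hpcGB : ‖pc G - B‖ ≤ (N₂:ℝ) := by
        have e : pc G - B = ∑ j ∈ Finset.range N₂,
            (b (t₂ j) (π (y j)) - b (t₂ j) (x₂ j)) := by
          rw [hGdef, hBdef, map_sum, ← Finset.sum_sub_distrib]
          refine Finset.sum_congr rfl fun j hj => ?_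
          rw [hpcoe, ← hrel]
        rw [e]
        calc ‖∑ j ∈ Finset.range N₂, (b (t₂ j) (π (y j)) - b (t₂ j) (x₂ j))‖
            ≤ ∑ j ∈ Finset.range N₂, ‖b (t₂ j) (π (y j)) - b (t₂ j) (x₂ j)‖ :=
              norm_sum_le _ _
          _ ≤ ∑ _j ∈ Finset.range N₂, (1:ℝ) := Finset.sum_le_sum fun j hj => by
              have hj' := Finset.mem_range.1 hj
              exact hηuc (t₂ j) (htt₂ j hj').1 (htt₂ j hj').2 _ _ (hyd j hj')
          _ = (N₂:ℝ) := by simp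
      have hvdefD : chainExp a Nz xz tz = D⁻¹ • Az := by
        simp only [chainExp, hDdef, hAzdef]
      have hlamexp : chainExp b N₂ x₂ t₂ = Θ⁻¹ • B := by
        simp only [chainExp, hΘdef, hBdef]
      have hDinv0 : (0:ℝ) ≤ D⁻¹ := inv_nonneg.2 hD0.le
      have hNS0 : (0:ℝ) < (N₂:ℝ) * S := mul_pos (lt_of_lt_of_le one_pos hN₂R) hS0
      have hN₂0 : (0:ℝ) < (N₂:ℝ) := by linarith
      have hDinvle : D⁻¹ ≤ ((N₂:ℝ) * S)⁻¹ := inv_anti₀ hNS0 hDN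
      refine ⟨chainExp a Nz xz tz, ?_, ?_, Nz, xz, tz, y 0, hyM 0, y N₂, hyM N₂, hchz, rfl⟩
      · have hAznorm : ‖Az‖ ≤ Ka * Θ + (N₂:ℝ) * C := by
          have e2 : Az = G + (Az - G) := by abel
          calc ‖Az‖ = ‖G + (Az - G)‖ := by rw [← e2]
            _ ≤ ‖G‖ + ‖Az - G‖ := norm_add_le _ _
            _ ≤ Ka * Θ + (N₂:ℝ) * C := add_le_add hGnorm hz3
        have hABD : ‖Az‖ ≤ (Ka + 1) * D := by
          have h1 : Ka * Θ ≤ Ka * D := by nlinarith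
          have h2 : (N₂:ℝ) * C ≤ (N₂:ℝ) * S := by nlinarith
          nlinarith
        rw [hvdefD, norm_smul, Real.norm_eq_abs, abs_of_pos (inv_pos.2 hD0)]
        calc D⁻¹ * ‖Az‖ ≤ D⁻¹ * ((Ka + 1) * D) :=
              mul_le_mul_of_nonneg_left hABD hDinv0
          _ = Ka + 1 := by field_simp
      · have hverr : ‖pc (chainExp a Nz xz tz) - chainExp b N₂ x₂ t₂‖ ≤ 1/Tm := by
          rw [hvdefD, hlamexp, map_smul]
          have hdecomp : D⁻¹ • pc Az - Θ⁻¹ • B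
              = D⁻¹ • (pc Az - pc G) + D⁻¹ • (pc G - B) + (D⁻¹ - Θ⁻¹) • B := by
            module
          rw [hdecomp]
          have ht1 : ‖D⁻¹ • (pc Az - pc G)‖ ≤ ‖pc‖ * C * S⁻¹ := by
            rw [norm_smul, Real.norm_eq_abs, abs_of_nonneg hDinv0, ← map_sub]
            have hb1 : ‖pc (Az - G)‖ ≤ ‖pc‖ * ((N₂:ℝ) * C) :=
              le_trans (pc.le_opNorm _) (mul_le_mul_of_nonneg_left hz3 hpc0)
            calc D⁻¹ * ‖pc (Az - G)‖ ≤ ((N₂:ℝ)*S)⁻¹ * (‖pc‖ * ((N₂:ℝ) * C)) :=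
                  mul_le_mul hDinvle hb1 (norm_nonneg _) (by positivity)
              _ = ‖pc‖ * C * S⁻¹ := by
                  field_simp
          have ht2 : ‖D⁻¹ • (pc G - B)‖ ≤ S⁻¹ := by
            rw [norm_smul, Real.norm_eq_abs, abs_of_nonneg hDinv0]
            calc D⁻¹ * ‖pc G - B‖ ≤ ((N₂:ℝ)*S)⁻¹ * (N₂:ℝ) :=
                  mul_le_mul hDinvle hpcGB (norm_nonneg _) (by positivity)
              _ = S⁻¹ := by field_simp
          have ht3 : ‖(D⁻¹ - Θ⁻¹) • B‖ ≤ Kb * C * S⁻¹ := by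
            rw [norm_smul, Real.norm_eq_abs]
            have hDinvΘ : D⁻¹ ≤ Θ⁻¹ := inv_anti₀ hΘ0 hz1
            have habs : |D⁻¹ - Θ⁻¹| = Θ⁻¹ - D⁻¹ := by
              rw [abs_of_nonpos (by linarith)]
              ring
            rw [habs]
            calc (Θ⁻¹ - D⁻¹) * ‖B‖ ≤ (Θ⁻¹ - D⁻¹) * (Kb * Θ) :=
                  mul_le_mul_of_nonneg_left hBnorm (by linarith)
              _ = Kb * (D - Θ) * D⁻¹ := by
                  field_simp
              _ ≤ Kb * ((N₂:ℝ) * C) * D⁻¹ := by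
                  have h7 : Kb * (D - Θ) ≤ Kb * ((N₂:ℝ) * C) := by nlinarith
                  exact mul_le_mul_of_nonneg_right h7 hDinv0
              _ ≤ Kb * ((N₂:ℝ) * C) * ((N₂:ℝ)*S)⁻¹ :=
                  mul_le_mul_of_nonneg_left hDinvle (by positivity)
              _ = Kb * C * S⁻¹ := by
                  field_simp
          have htail : ‖D⁻¹ • (pc Az - pc G) + D⁻¹ • (pc G - B) + (D⁻¹ - Θ⁻¹) • B‖
              ≤ ‖pc‖ * C * S⁻¹ + S⁻¹ + Kb * C * S⁻¹ := by
            have hn1 := norm_add_le (D⁻¹ • (pc Az - pc G) + D⁻¹ • (pc G - B))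
              ((D⁻¹ - Θ⁻¹) • B)
            have hn2 := norm_add_le (D⁻¹ • (pc Az - pc G)) (D⁻¹ • (pc G - B))
            linarith
          have hfin : ‖pc‖ * C * S⁻¹ + S⁻¹ + Kb * C * S⁻¹ ≤ 1/Tm := by
            have he : ‖pc‖ * C * S⁻¹ + S⁻¹ + Kb * C * S⁻¹ = R * S⁻¹ := by
              rw [hRdef]
              ring
            rw [he, one_div]
            have hTmR : 0 < Tm * R := by positivity
            have h6 : S⁻¹ ≤ (Tm*R)⁻¹ := inv_anti₀ hTmR hSR
            calc R * S⁻¹ ≤ R * (Tm*R)⁻¹ := mul_le_mul_of_nonneg_left h6 hR0.le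
              _ = Tm⁻¹ := by
                  field_simp
          exact le_trans htail hfin
        have hlw : ‖chainExp b N₂ x₂ t₂ - w‖ ≤ 1/Tm := by
          rw [hexp, ← dist_eq_norm, dist_comm]
          exact hlam1d.le
        have htri : ‖pc (chainExp a Nz xz tz) - w‖
            ≤ ‖pc (chainExp a Nz xz tz) - chainExp b N₂ x₂ t₂‖
              + ‖chainExp b N₂ x₂ t₂ - w‖ := by
          have := dist_triangle (pc (chainExp a Nz xz tz)) (chainExp b N₂ x₂ t₂) w
          simpa [dist_eq_norm] using this
        have h2Tm : 1/Tm + 1/Tm = 2/((m:ℝ)+1) := by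
          rw [hTmdef]
          ring
        linarith
    choose vs hvnorm hverr hvchain using key
    have hball : ∀ m, vs m ∈ Metric.closedBall (0:V) (Ka + 1) := fun m => by
      rw [Metric.mem_closedBall, dist_zero_right]
      exact hvnorm m
    obtain ⟨v, hvmemball, σ, hσ, hconv⟩ :=
      (isCompact_closedBall (0:V) (Ka+1)).tendsto_subseq hball
    have hlim1 : Filter.Tendsto (fun k => pc (vs (σ k))) atTop (𝓝 (pc v)) :=
      (pc.continuous.tendsto v).comp hconv
    have hlim2 : Filter.Tendsto (fun k => pc (vs (σ k))) atTop (𝓝 w) := by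
      rw [tendsto_iff_norm_sub_tendsto_zero]
      have hb : ∀ k, ‖pc (vs (σ k)) - w‖ ≤ 2/((σ k:ℝ)+1) := fun k => hverr (σ k)
      have hlim3 : Filter.Tendsto (fun k : ℕ => 2/((σ k:ℝ)+1)) atTop (𝓝 0) := by
        have h4 : Filter.Tendsto (fun k : ℕ => ((σ k:ℝ)+1)) atTop atTop :=
          Filter.tendsto_atTop_add_const_right _ 1
            (tendsto_natCast_atTop_atTop.comp hσ.tendsto_atTop)
        simpa [div_eq_mul_inv] using h4.inv_tendsto_atTop.const_mul (2:ℝ)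
      exact squeeze_zero (fun k => norm_nonneg _) hb hlim3
    have hpv : pc v = w := tendsto_nhds_unique hlim1 hlim2
    have hvmem : v ∈ morseSpec φ a M := by
      simp only [morseSpec, Set.mem_iInter]
      intro ε hε T hT
      obtain ⟨m₀, hm₀⟩ := exists_nat_ge (max T (1/ε))
      refine mem_closure_of_tendsto hconv (Filter.eventually_atTop.2 ⟨m₀, fun k hk => ?_⟩)
      have hσk : (m₀:ℝ) ≤ (σ k : ℝ) := by exact_mod_cast le_trans hk hσ.le_apply
      have hTle : T ≤ (σ k:ℝ)+1 := by
        have := le_trans (le_max_left T (1/ε)) hm₀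
        linarith
      have hεle : 1/((σ k:ℝ)+1) ≤ ε := by
        have h5 : 1/ε ≤ (σ k:ℝ) := le_trans (le_trans (le_max_right _ _) hm₀) hσk
        have he : ε * (1/ε) = 1 := by field_simp
        rw [div_le_iff₀ (by positivity)]
        nlinarith
      obtain ⟨N, x, t, pe, hpe, qe, hqe, hchain, hveq⟩ := hvchain (σ k)
      exact ⟨N, x, t, pe, hpe, qe, hqe, chain_mono hchain hεle hTle, hveq⟩
    refine ⟨v, hvmem, ?_⟩
    rw [← hpcoe]
    exact hpv
  · -- easy direction
    rintro _ ⟨v, hv, rfl⟩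
    simp only [morseSpec, Set.mem_iInter] at hv ⊢
    intro ε' hε' T' hT'
    obtain ⟨δ, hδ, hδ'⟩ := Metric.uniformContinuous_iff.1
      (CompactSpace.uniformContinuous_of_continuous hπ) ε' hε'
    have hv' := hv δ hδ T' hT'
    have himg : (p '' {v | ∃ N x t, ∃ pp ∈ M, ∃ qq ∈ M,
        IsFlowChain φ δ T' N x t pp qq ∧ v = chainExp a N x t}) ⊆
        {v | ∃ N x t, ∃ pp ∈ π '' M, ∃ qq ∈ π '' M,
          IsFlowChain φ' ε' T' N x t pp qq ∧ v = chainExp b N x t} := by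
      rintro _ ⟨v', ⟨N, x, t, pp, hpp, qq, hqq, hchain, rfl⟩, rfl⟩
      refine ⟨N, fun i => π (x i), t, π pp, ⟨pp, hpp, rfl⟩, π qq, ⟨qq, hqq, rfl⟩, ?_, ?_⟩
      · obtain ⟨hN, hx0, hxN, ht, hd⟩ := hchain
        refine ⟨hN, by beta_reduce; rw [hx0], by beta_reduce; rw [hxN], ht, fun i hi => ?_⟩
        show dist (φ' (t i) (π (x i))) (π (x (i+1))) < ε'
        rw [← hequi]
        exact hδ' (hd i hi)
      · simp only [chainExp, map_smul, map_sum]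
        congr 1
        exact Finset.sum_congr rfl fun i _ => (hrel (t i) (x i)).symm
    have h1 : p v ∈ p '' closure {v | ∃ N x t, ∃ pp ∈ M, ∃ qq ∈ M,
        IsFlowChain φ δ T' N x t pp qq ∧ v = chainExp a N x t} :=
      Set.mem_image_of_mem _ hv'
    exact closure_mono himg (image_closure_subset_closure_image hpcont h1)


end
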